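/- Let k₂, k₃ > 0 and let b₃, e₃ be real numbers with 0 < b₃ < e₃. Then there exists a unique pair (t₂, t₃) of positive real numbers such that, setting b₂ := t₂ and e₂ := (1 + k₂⁻²)·t₂, the following hold: 0 < b₂ < e₂ < b₃, b₂ ≠ t₃, e₂ ≠ t₃, R_{k₃,t₃}(b₂) = b₃, and R_{k₃,t₃}(e₂) = e₃. (Equivalently: the reflections in the points p₂ = t₂·(1 + i/k₂) and p₃ = t₃·(1 + i/k₃) of the upper half-plane carry the boundary points ∞ ↦ b₂ ↦ b₃ and 0 ↦ e₂ ↦ e₃ respectively, and the boundary cycle ∞, 0, b₂, e₂, b₃, e₃ is positively ordered.) -/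

import Mathlib

/-- The boundary action on `ℝ` of the hyperbolic reflection of the upper half-plane in
the point `t·(1 + i/k)`: `R_{k,t}(x) = t − t²/(k²·(x − t))` (for `x ≠ t`). -/
noncomputable def Rmob (k t x : ℝ) : ℝ := t - t ^ 2 / (k ^ 2 * (x - t))

set_option maxHeartbeats 1000000

/-- Both roots of a positive-leading quadratic straddle any point below the discriminant
bound. -/
lemma root_straddle (a B D s : ℝ) (ha : 0 < a) (h : (2 * a * s - B) ^ 2 < D) :
    (B - Real.sqrt D) / (2 * a) < s ∧ s < (B + Real.sqrt D) / (2 * a) := by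
  obtain ⟨h1, h2⟩ := Real.sq_lt.mp h
  constructor
  · rw [div_lt_iff₀ (by linarith)]; linarith
  · rw [lt_div_iff₀ (by linarith)]; linarith

lemma unique_reflection_pair_aux (c K b₃ e₃ : ℝ)
    (hc : 1 < c) (hK : 0 < K) (hb₃ : 0 < b₃) (hbe : b₃ < e₃) :
    ∃! p : ℝ × ℝ, 0 < p.1 ∧ 0 < p.2 ∧
      0 < p.1 ∧ p.1 < c * p.1 ∧ c * p.1 < b₃ ∧
      p.1 ≠ p.2 ∧ c * p.1 ≠ p.2 ∧
      p.2 - p.2 ^ 2 / (K * (p.1 - p.2)) = b₃ ∧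
      p.2 - p.2 ^ 2 / (K * (c * p.1 - p.2)) = e₃ := by
  have he₃ : 0 < e₃ := lt_trans hb₃ hbe
  have ha : 0 < (c - 1) * (K + 1) := mul_pos (by linarith) (by linarith)
  have hB : 0 < (c - 1) * K * (b₃ + e₃) + c * e₃ - b₃ := by
    nlinarith [mul_pos (mul_pos (show (0:ℝ) < c - 1 by linarith) hK)
      (show (0:ℝ) < b₃ + e₃ by linarith)]
  have hC : 0 < (c - 1) * K * b₃ * e₃ := by
    have := mul_pos (mul_pos (mul_pos (show (0:ℝ) < c - 1 by linarith) hK) hb₃) he₃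
    linarith
  obtain ⟨D, hDdef⟩ : ∃ x : ℝ, x = ((c - 1) * K * (b₃ + e₃) + c * e₃ - b₃) ^ 2 -
      4 * ((c - 1) * (K + 1)) * ((c - 1) * K * b₃ * e₃) := ⟨_, rfl⟩
  have hDb : (2 * ((c - 1) * (K + 1)) * b₃ - ((c - 1) * K * (b₃ + e₃) + c * e₃ - b₃)) ^ 2
      < D := by
    have h : D = (2 * ((c - 1) * (K + 1)) * b₃ -
        ((c - 1) * K * (b₃ + e₃) + c * e₃ - b₃)) ^ 2 + 4 * ((c - 1) * (K + 1)) * c * b₃ *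
        (e₃ - b₃) := by rw [hDdef]; ring
    nlinarith [mul_pos (mul_pos (mul_pos ha (show (0:ℝ) < c by linarith)) hb₃)
      (show (0:ℝ) < e₃ - b₃ by linarith)]
  have hD : 0 < D := lt_of_le_of_lt (sq_nonneg _) hDb
  have hsq : Real.sqrt D ^ 2 = D := Real.sq_sqrt hD.le
  obtain ⟨t₃, ht₃def⟩ : ∃ x : ℝ, x = (((c - 1) * K * (b₃ + e₃) + c * e₃ - b₃) -
      Real.sqrt D) / (2 * ((c - 1) * (K + 1))) := ⟨_, rfl⟩
  -- t₃ is a root of the quadratic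
  have hroot : (c - 1) * (K + 1) * t₃ ^ 2 -
      ((c - 1) * K * (b₃ + e₃) + c * e₃ - b₃) * t₃ + (c - 1) * K * b₃ * e₃ = 0 := by
    have h2a : 2 * ((c - 1) * (K + 1)) * t₃ - ((c - 1) * K * (b₃ + e₃) + c * e₃ - b₃) =
        -Real.sqrt D := by
      rw [ht₃def]; field_simp [show c - 1 ≠ 0 by linarith]; ring
    have key : (2 * ((c - 1) * (K + 1)) * t₃ -
        ((c - 1) * K * (b₃ + e₃) + c * e₃ - b₃)) ^ 2 =
        ((c - 1) * K * (b₃ + e₃) + c * e₃ - b₃) ^ 2 -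
        4 * ((c - 1) * (K + 1)) * ((c - 1) * K * b₃ * e₃) := by
      rw [h2a, neg_sq, hsq, hDdef]
    have h4 : 4 * ((c - 1) * (K + 1)) * ((c - 1) * (K + 1) * t₃ ^ 2 -
        ((c - 1) * K * (b₃ + e₃) + c * e₃ - b₃) * t₃ + (c - 1) * K * b₃ * e₃) = 0 := by
      linear_combination key
    have h40 : (4 : ℝ) * ((c - 1) * (K + 1)) ≠ 0 := by positivity
    exact (mul_eq_zero.mp h4).resolve_left h40
  have ht₃pos : 0 < t₃ := by
    have h : Real.sqrt D < (c - 1) * K * (b₃ + e₃) + c * e₃ - b₃ := by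
      rw [Real.sqrt_lt' hB, hDdef]; nlinarith
    rw [ht₃def]; exact div_pos (by linarith) (by linarith)
  have ht₃b₃ : t₃ < b₃ := by
    have := (root_straddle _ _ _ _ ha hDb).1
    rw [← ht₃def] at this; exact this
  -- t₃ < K*b₃/(K+1), so that t₂ > 0
  have hKb : (K + 1) * t₃ < K * b₃ := by
    have hsneg : ((c - 1) * (K + 1)) * (K * b₃ / (K + 1)) ^ 2 -
        ((c - 1) * K * (b₃ + e₃) + c * e₃ - b₃) * (K * b₃ / (K + 1)) +
        (c - 1) * K * b₃ * e₃ < 0 := by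
      have h1 : (((c - 1) * (K + 1)) * (K * b₃ / (K + 1)) ^ 2 -
          ((c - 1) * K * (b₃ + e₃) + c * e₃ - b₃) * (K * b₃ / (K + 1)) +
          (c - 1) * K * b₃ * e₃) * (K + 1) = b₃ * K * (b₃ - e₃) := by
        field_simp; ring
      nlinarith [mul_pos (mul_pos hb₃ hK) (show (0:ℝ) < e₃ - b₃ by linarith)]
    have hs2 : (2 * ((c - 1) * (K + 1)) * (K * b₃ / (K + 1)) -
        ((c - 1) * K * (b₃ + e₃) + c * e₃ - b₃)) ^ 2 < D := by
      have h : (2 * ((c - 1) * (K + 1)) * (K * b₃ / (K + 1)) -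
          ((c - 1) * K * (b₃ + e₃) + c * e₃ - b₃)) ^ 2 =
          D + 4 * ((c - 1) * (K + 1)) * (((c - 1) * (K + 1)) * (K * b₃ / (K + 1)) ^ 2 -
          ((c - 1) * K * (b₃ + e₃) + c * e₃ - b₃) * (K * b₃ / (K + 1)) +
          (c - 1) * K * b₃ * e₃) := by rw [hDdef]; ring
      nlinarith [mul_pos ha (show (0:ℝ) < -(((c - 1) * (K + 1)) * (K * b₃ / (K + 1)) ^ 2 -
        ((c - 1) * K * (b₃ + e₃) + c * e₃ - b₃) * (K * b₃ / (K + 1)) +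
        (c - 1) * K * b₃ * e₃) by linarith)]
    have h := (root_straddle _ _ _ _ ha hs2).1
    rw [← ht₃def, lt_div_iff₀ (show (0:ℝ) < K + 1 by linarith)] at h
    linarith
  obtain ⟨t₂, ht₂def⟩ : ∃ x : ℝ, x = t₃ - t₃ ^ 2 / (K * (b₃ - t₃)) := ⟨_, rfl⟩
  have hden : 0 < K * (b₃ - t₃) := mul_pos hK (by linarith)
  have hden2 : 0 < K * (e₃ - t₃) := mul_pos hK (by linarith)
  have hpoly1 : t₃ ^ 2 = (t₃ - t₂) * (K * (b₃ - t₃)) := by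
    rw [ht₂def, sub_sub_cancel, div_mul_cancel₀ _ hden.ne']
  have ht₂t₃ : t₂ < t₃ := by
    rw [ht₂def]
    have : 0 < t₃ ^ 2 / (K * (b₃ - t₃)) := div_pos (by positivity) hden
    linarith
  have ht₂pos : 0 < t₂ := by
    rw [ht₂def, sub_pos, div_lt_iff₀ hden]
    have h' : t₃ < K * (b₃ - t₃) := by nlinarith
    nlinarith
  -- the second root relation: c * t₂ = t₃ - t₃²/(K(e₃-t₃))
  have hpoly2 : t₃ ^ 2 = (t₃ - c * t₂) * (K * (e₃ - t₃)) := by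
    have hq' : (K * (b₃ - t₃)) * (t₃ ^ 2 - (t₃ - c * t₂) * (K * (e₃ - t₃))) = 0 := by
      linear_combination (c * (K * (e₃ - t₃))) * hpoly1 + (t₃ * K) * hroot
    have := (mul_eq_zero.mp hq').resolve_left hden.ne'
    linarith [sub_eq_zero.mp this]
  have hct₂t₃ : c * t₂ < t₃ := by
    have hpos : 0 < (t₃ - c * t₂) * (K * (e₃ - t₃)) := by
      rw [← hpoly2]; positivity
    rcases mul_pos_iff.mp hpos with ⟨h1, h2⟩ | ⟨h1, h2⟩
    · linarith
    · linarith
  have hR1 : t₃ - t₃ ^ 2 / (K * (t₂ - t₃)) = b₃ := by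
    have hne : K * (t₂ - t₃) ≠ 0 := mul_ne_zero hK.ne' (sub_ne_zero.mpr ht₂t₃.ne)
    have h : t₃ ^ 2 / (K * (t₂ - t₃)) = t₃ - b₃ := by
      rw [div_eq_iff hne]; linear_combination hpoly1
    rw [h]; ring
  have hR2 : t₃ - t₃ ^ 2 / (K * (c * t₂ - t₃)) = e₃ := by
    have hne : K * (c * t₂ - t₃) ≠ 0 := mul_ne_zero hK.ne' (sub_ne_zero.mpr hct₂t₃.ne)
    have h : t₃ ^ 2 / (K * (c * t₂ - t₃)) = t₃ - e₃ := by
      rw [div_eq_iff hne]; linear_combination hpoly2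
    rw [h]; ring
  refine ⟨⟨t₂, t₃⟩, ⟨ht₂pos, ht₃pos, ht₂pos, ?_, ?_, ?_, ?_, hR1, hR2⟩, ?_⟩
  · nlinarith
  · exact lt_trans hct₂t₃ ht₃b₃
  · exact ne_of_lt ht₂t₃
  · exact ne_of_lt hct₂t₃
  rintro ⟨u, v⟩ ⟨hu, hv, -, hucu, hcub, huv, hcuv, hRu, hRcu⟩
  simp only at hu hv hucu hcub huv hcuv hRu hRcu
  -- ordering: c*u < v < b₃
  have hvb : v < b₃ := by
    by_contra hcon
    push_neg at hcon
    have h2 : v ^ 2 / (K * (u - v)) < 0 :=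
      div_neg_of_pos_of_neg (by positivity) (by nlinarith)
    linarith
  have hcuv' : c * u < v := by
    rcases lt_trichotomy v (c * u) with h | h | h
    · rcases lt_trichotomy v u with h2 | h2 | h2
      · have h3 : 0 < v ^ 2 / (K * (u - v)) :=
          div_pos (by positivity) (mul_pos hK (by linarith))
        linarith
      · exact absurd h2.symm huv
      · have h3 : 0 < v ^ 2 / (K * (c * u - v)) :=
          div_pos (by positivity) (mul_pos hK (by linarith))
        linarith
    · exact absurd h.symm hcuv
    · exact h
  have huv' : u < v := by nlinarith
  have hne1 : K * (u - v) ≠ 0 := mul_ne_zero hK.ne' (sub_ne_zero.mpr huv'.ne)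
  have hne2 : K * (c * u - v) ≠ 0 := mul_ne_zero hK.ne' (sub_ne_zero.mpr hcuv'.ne)
  -- polynomial forms of the two reflection equations
  have hb2 : v ^ 2 = (v - b₃) * (K * (u - v)) := by
    have h : v ^ 2 / (K * (u - v)) = v - b₃ := by linarith [hRu]
    rw [← h, div_mul_cancel₀ _ hne1]
  have he2 : v ^ 2 = (v - e₃) * (K * (c * u - v)) := by
    have h : v ^ 2 / (K * (c * u - v)) = v - e₃ := by linarith [hRcu]
    rw [← h, div_mul_cancel₀ _ hne2]
  -- v is a root of the quadratic
  have hGv : (c - 1) * (K + 1) * v ^ 2 -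
      ((c - 1) * K * (b₃ + e₃) + c * e₃ - b₃) * v + (c - 1) * K * b₃ * e₃ = 0 := by
    have h : v * ((c - 1) * (K + 1) * v ^ 2 -
        ((c - 1) * K * (b₃ + e₃) + c * e₃ - b₃) * v + (c - 1) * K * b₃ * e₃) = 0 := by
      linear_combination (c * (v - e₃)) * hb2 + (-(v - b₃)) * he2
    exact (mul_eq_zero.mp h).resolve_left hv.ne'
  -- hence v = t₃
  have hveq : v = t₃ := by
    have hsum : (v - t₃) * ((c - 1) * (K + 1) * (v + t₃) -
        ((c - 1) * K * (b₃ + e₃) + c * e₃ - b₃)) = 0 := by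
      linear_combination hGv - hroot
    rcases mul_eq_zero.mp hsum with h | h
    · linarith [sub_eq_zero.mp h]
    · exfalso
      have hCvt : (c - 1) * K * b₃ * e₃ - (c - 1) * (K + 1) * v * t₃ = 0 := by
        linear_combination hGv - v * h
      have hfac : (c - 1) * (K + 1) * (b₃ - v) * (b₃ - t₃) = c * b₃ * (b₃ - e₃) := by
        linear_combination (-b₃) * h - hCvt
      have hx1 : (0:ℝ) < (c - 1) * (K + 1) * (b₃ - v) * (b₃ - t₃) := by
        have := mul_pos (mul_pos ha (show (0:ℝ) < b₃ - v by linarith))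
          (show (0:ℝ) < b₃ - t₃ by linarith)
        linarith [this]
      have hx2 : (0:ℝ) < c * b₃ * (e₃ - b₃) :=
        mul_pos (mul_pos (show (0:ℝ) < c by linarith) hb₃)
          (show (0:ℝ) < e₃ - b₃ by linarith)
      linarith [hfac, hx1, hx2]
  -- and u = t₂
  have hueq : u = t₂ := by
    have h : u * (K * (b₃ - t₃)) = t₂ * (K * (b₃ - t₃)) := by
      rw [hveq] at hb2
      linear_combination hb2 - hpoly1
    exact mul_right_cancel₀ hden.ne' h
  rw [Prod.mk.injEq]
  exact ⟨hueq, hveq⟩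

/-- Let `k₂, k₃ > 0` and `0 < b₃ < e₃`.  There exists a unique pair
`(t₂, t₃)` of positive reals such that, with `b₂ := t₂` and `e₂ := (1 + k₂⁻²)·t₂`, one has
`0 < b₂ < e₂ < b₃`, `b₂ ≠ t₃`, `e₂ ≠ t₃`, `R_{k₃,t₃}(b₂) = b₃` and `R_{k₃,t₃}(e₂) = e₃`.
(Equivalently: the reflections in `p₂ = t₂(1 + i/k₂)` and `p₃ = t₃(1 + i/k₃)` carry the
boundary points `∞ ↦ b₂ ↦ b₃` and `0 ↦ e₂ ↦ e₃`, and the boundary cycle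
`∞, 0, b₂, e₂, b₃, e₃` is positively ordered.) -/
theorem unique_reflection_pair (k₂ k₃ b₃ e₃ : ℝ)
    (hk₂ : 0 < k₂) (hk₃ : 0 < k₃) (hb₃ : 0 < b₃) (hbe : b₃ < e₃) :
    ∃! p : ℝ × ℝ, 0 < p.1 ∧ 0 < p.2 ∧
      0 < p.1 ∧ p.1 < (1 + k₂⁻¹ ^ 2) * p.1 ∧ (1 + k₂⁻¹ ^ 2) * p.1 < b₃ ∧
      p.1 ≠ p.2 ∧ (1 + k₂⁻¹ ^ 2) * p.1 ≠ p.2 ∧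
      Rmob k₃ p.2 p.1 = b₃ ∧ Rmob k₃ p.2 ((1 + k₂⁻¹ ^ 2) * p.1) = e₃ := by

  have hc : 1 < 1 + k₂⁻¹ ^ 2 := by
    have : 0 < k₂⁻¹ ^ 2 := by positivity
    linarith
  have hK : 0 < k₃ ^ 2 := by positivity
  exact unique_reflection_pair_aux (1 + k₂⁻¹ ^ 2) (k₃ ^ 2) b₃ e₃ hc hK hb₃ hbe
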